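/- For every integer p, every binary vector x : Fin n → ℤ, every z : Fin n → ℤ and every bit string e : Fin n → Fin 2, the action of an XP operator on a computational basis vector is XP_N(p|x|z).mulVec |e⟩ = ω^(p + 2 * ∑ i, (e i : ℤ) * z i) • |e ⊕ x⟩, where e ⊕ x denotes componentwise addition modulo 2. -/

import Mathlib

open Matrix

/-- `ω = exp(πi/N)`. -/
noncomputable def omN (N : ℕ) : ℂ := Complex.exp (Real.pi * Complex.I / N)

/-- The Pauli X matrix. -/
def Xm : Matrix (Fin 2) (Fin 2) ℂ := !![0, 1; 1, 0]

/-- The precision-`N` phase matrix `P = diag(1, ω²)`. -/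
noncomputable def Pm (N : ℕ) : Matrix (Fin 2) (Fin 2) ℂ := !![1, 0; 0, (omN N) ^ 2]

/-- The precision-`N` XP operator `XP_N(p|x|z)` on `n` qubits, the matrix indexed by bit
strings whose `(f, e)` entry is `ω^p * ∏ i, (X^(x i) * P^(z i)) (f i) (e i)`. -/
noncomputable def XP (N n : ℕ) (p : ℤ) (x z : Fin n → ℤ) :
    Matrix (Fin n → Fin 2) (Fin n → Fin 2) ℂ :=
  Matrix.of fun f e => (omN N) ^ p * ∏ i, ((Xm ^ (x i)) * (Pm N) ^ (z i)) (f i) (e i)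

/-- The antisymmetric operator `D_N(z) = XP_N(∑ i, z i | 0 | -z)`. -/
noncomputable def DN (N n : ℕ) (z : Fin n → ℤ) :
    Matrix (Fin n → Fin 2) (Fin n → Fin 2) ℂ :=
  XP N n (∑ i, z i) 0 (-z)

/-- A vector is binary if every entry is 0 or 1. -/
def IsBinary {n : ℕ} (x : Fin n → ℤ) : Prop := ∀ i, x i = 0 ∨ x i = 1

lemma omN_ne (N : ℕ) : omN N ≠ 0 := Complex.exp_ne_zero _

lemma Pm_det (N : ℕ) : IsUnit (Pm N).det := by
  simp [Pm, Matrix.det_fin_two_of, isUnit_iff_ne_zero, omN_ne]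

lemma Pm_inv (N : ℕ) : (Pm N)⁻¹ = !![1, 0; 0, ((omN N) ^ 2)⁻¹] := by
  apply inv_eq_right_inv
  rw [Pm, Matrix.mul_fin_two]
  norm_num [← Matrix.one_fin_two, mul_inv_cancel₀ (pow_ne_zero 2 (omN_ne N))]

lemma Pm_zpow (N : ℕ) (k : ℤ) : (Pm N) ^ k = !![1, 0; 0, (omN N) ^ (2*k)] := by
  have hω := omN_ne N
  induction k using Int.induction_on with
  | zero => simp [Matrix.one_fin_two]
  | succ k ih =>
      rw [Matrix.zpow_add_one (Pm_det N), ih, Pm, Matrix.mul_fin_two]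
      have : (omN N) ^ (2*((k:ℤ)+1)) = (omN N) ^ (2*(k:ℤ)) * (omN N) ^ 2 := by
        rw [mul_add, zpow_add₀ hω, mul_one, zpow_two]; ring
      norm_num [this]
  | pred k ih =>
      rw [show (-(k:ℤ) - 1) = (-(k:ℤ)) - 1 from rfl, Matrix.zpow_sub_one (Pm_det N), ih,
        Pm_inv, Matrix.mul_fin_two]
      have : (omN N) ^ (2*(-(k:ℤ)-1)) = (omN N) ^ (2*(-(k:ℤ))) * ((omN N) ^ 2)⁻¹ := by
        rw [mul_sub, mul_one, zpow_sub₀ hω, div_eq_mul_inv, zpow_two, ← pow_two]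
      norm_num [this]

lemma entry_eq (N : ℕ) (a b : ℤ) (ha : a = 0 ∨ a = 1) (f e : Fin 2) :
    ((Xm ^ a) * (Pm N) ^ b) f e =
      if f = e + (Fin.ofNat 2 a.toNat : Fin 2) then (omN N) ^ (2 * (e : ℤ) * b) else 0 := by
  rcases ha with h | h <;> subst h
  · rw [zpow_zero, one_mul, Pm_zpow]
    fin_cases f <;> fin_cases e <;>
      simp [Matrix.cons_val_zero, Matrix.cons_val_one] <;> ring_nf
  · rw [zpow_one, Pm_zpow, Xm, Matrix.mul_fin_two]
    fin_cases f <;> fin_cases e <;>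
      norm_num [Matrix.cons_val_zero, Matrix.cons_val_one] <;>
        simp [show ((0:Fin 2) = 2) from by decide, show ¬((1:Fin 2) = 2) from by decide]

lemma zpow_sum' {α : Type*} [DecidableEq α] (s : Finset α) (c : α → ℤ) {a : ℂ} (ha : a ≠ 0) :
    ∏ i ∈ s, a ^ (c i) = a ^ (∑ i ∈ s, c i) := by
  induction s using Finset.induction_on with
  | empty => simp
  | insert a s h ih => simp [Finset.prod_insert h, Finset.sum_insert h, ih, zpow_add₀ ha]

/-- **Action of an XP operator on a computational basis vector** (OP):
`XP_N(p|x|z) |e⟩ = ω^(p + 2 e·z) |e ⊕ x⟩`, where `⊕` is componentwise addition mod 2. -/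
theorem XP_mulVec_single (N n : ℕ) (hN : 2 ≤ N) (hn : 1 ≤ n) (p : ℤ) (x z : Fin n → ℤ)
    (hx : IsBinary x) (e : Fin n → Fin 2) :
    (XP N n p x z).mulVec (Pi.single e 1) =
      (omN N) ^ (p + 2 * ∑ i, (e i : ℤ) * z i) •
        (Pi.single (fun i => e i + (Fin.ofNat 2 (x i).toNat : Fin 2)) 1 : (Fin n → Fin 2) → ℂ) := by
  funext f
  rw [Matrix.mulVec_single]
  simp only [mul_one, Pi.smul_apply, smul_eq_mul, MulOpposite.op_one, one_smul, Matrix.col_apply]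
  rw [show (XP N n p x z) f e =
      (omN N) ^ p * ∏ i, ((Xm ^ (x i)) * (Pm N) ^ (z i)) (f i) (e i) from rfl]
  have hprod : ∀ i, ((Xm ^ (x i)) * (Pm N) ^ (z i)) (f i) (e i) =
      if f i = e i + (Fin.ofNat 2 (x i).toNat : Fin 2) then (omN N) ^ (2 * (e i : ℤ) * z i) else 0 :=
    fun i => entry_eq N (x i) (z i) (hx i) (f i) (e i)
  simp only [hprod]
  by_cases hf : f = fun i => e i + (Fin.ofNat 2 (x i).toNat : Fin 2)
  · subst hf
    rw [Pi.single_eq_same, mul_one]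
    have : ∀ i ∈ Finset.univ, (if (fun i => e i + (Fin.ofNat 2 (x i).toNat : Fin 2)) i
        = e i + (Fin.ofNat 2 (x i).toNat : Fin 2) then (omN N) ^ (2 * (e i : ℤ) * z i) else 0)
        = (omN N) ^ (2 * (e i : ℤ) * z i) := by intro i _; simp
    rw [Finset.prod_congr rfl this, zpow_sum' _ _ (omN_ne N), ← zpow_add₀ (omN_ne N)]
    congr 1
    rw [Finset.mul_sum]
    exact congrArg (p + ·) (Finset.sum_congr rfl fun i _ => by ring)
  · rw [Pi.single_eq_of_ne hf, mul_zero]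
    obtain ⟨i, hi⟩ : ∃ i, f i ≠ e i + (Fin.ofNat 2 (x i).toNat : Fin 2) := by
      by_contra h; push_neg at h; exact hf (funext h)
    rw [Finset.prod_eq_zero (Finset.mem_univ i) (by rw [if_neg hi]), mul_zero]
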